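/- Let X be a quasi-compact, locally weakly quasi-compact space and let {F_i}_{i∈I} be a filtered inductive system of sheaves of k-modules on X. Then the natural morphism colim_i Γ(X; F_i) → Γ(X; colim_i F_i) is an isomorphism, where colim_i F_i denotes the colimit in the category of sheaves. -/

import Mathlib

open Set

/-- `RWQC V U` : the open set `V` is relatively weakly quasi-compact in `U`, i.e. every
open covering of `U` admits a finite subfamily covering `V`. -/
def RWQC {X : Type*} [TopologicalSpace X] (V U : Set X) : Prop :=
  ∀ 𝒰 : Set (Set X), (∀ W ∈ 𝒰, IsOpen W) → U ⊆ ⋃₀ 𝒰 →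
    ∃ 𝒱 ⊆ 𝒰, 𝒱.Finite ∧ V ⊆ ⋃₀ 𝒱

/-- A topological space is locally weakly quasi-compact if it satisfies LWC1-LWC3. -/
structure LocallyWeaklyQuasiCompact (X : Type*) [TopologicalSpace X] : Prop where
  lwc1 : ∀ U : Set X, IsOpen U → ∀ x ∈ U, ∀ N ∈ nhds x,
    ∃ V : Set X, IsOpen V ∧ x ∈ V ∧ V ⊆ N ∧ RWQC V U
  lwc2 : ∀ U V U' V' : Set X, IsOpen U → IsOpen V → IsOpen U' → IsOpen V' →
    RWQC U' U → RWQC V' V → RWQC (U' ∩ V') (U ∩ V)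
  lwc3 : ∀ U U' : Set X, IsOpen U → IsOpen U' → RWQC U' U →
    ∃ W : Set X, IsOpen W ∧ RWQC U' W ∧ RWQC W U

open CategoryTheory CategoryTheory.Limits TopologicalSpace Opposite

/-- The global sections functor on sheaves of `k`-modules. -/
noncomputable def globalSections (k : Type) [CommRing k] (X : Type) [TopologicalSpace X] :
    Sheaf (Opens.grothendieckTopology X) (ModuleCat k) ⥤ ModuleCat k :=
  sheafToPresheaf _ _ ⋙ (evaluation (Opens X)ᵒᵖ (ModuleCat k)).obj (op ⊤)

set_option linter.unusedSectionVars false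
set_option maxHeartbeats 1000000

open Set CategoryTheory CategoryTheory.Limits TopologicalSpace Opposite

variable {k : Type} [CommRing k] {X : Type} [TopologicalSpace X]
  {I : Type} [SmallCategory I] [IsFiltered I]
  (F : I ⥤ Sheaf (Opens.grothendieckTopology X) (ModuleCat.{0} k))

/-- compatibility: the underlying morphism of a morphism in an induced category -/
abbrev CategoryTheory.InducedCategory.Hom.val {C D : Type*} [Category D] {F : C → D}
    {X Y : InducedCategory D F} (f : InducedCategory.Hom X Y) : F X ⟶ F Y := f.hom

namespace Stmt8Aux

abbrev J (X : Type) [TopologicalSpace X] := Opens.grothendieckTopology X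
abbrev A (k : Type) [CommRing k] := ModuleCat.{0} k

noncomputable abbrev P := colimit (F ⋙ sheafToPresheaf (J X) (A k))

/-- natural iso `F ≅ (F ⋙ sheafToPresheaf) ⋙ presheafToSheaf` -/
noncomputable def β : F ≅ (F ⋙ sheafToPresheaf (J X) (A k)) ⋙ presheafToSheaf (J X) (A k) :=
  (Functor.rightUnitor F).symm ≪≫ Functor.isoWhiskerLeft F (sheafificationNatIso (J X) (A k))

noncomputable def e : colimit F ≅ (presheafToSheaf (J X) (A k)).obj (P F) :=
  HasColimit.isoOfNatIso (β F) ≪≫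
    (preservesColimitIso (presheafToSheaf (J X) (A k)) (F ⋙ sheafToPresheaf (J X) (A k))).symm

theorem star (i : I) :
    (colimit.ι F i).val ≫ (e F).hom.val =
      colimit.ι (F ⋙ sheafToPresheaf (J X) (A k)) i ≫ toSheafify (J X) (P F) := by
  have h1 : colimit.ι F i ≫ (e F).hom =
      (β F).hom.app i ≫ (presheafToSheaf (J X) (A k)).map
        (colimit.ι (F ⋙ sheafToPresheaf (J X) (A k)) i) := by
    simp [e, HasColimit.isoOfNatIso_ι_hom, ι_preservesColimitIso_inv]
  have h2 : (colimit.ι F i).val ≫ (e F).hom.val =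
      ((β F).hom.app i).val ≫ ((presheafToSheaf (J X) (A k)).map
        (colimit.ι (F ⋙ sheafToPresheaf (J X) (A k)) i)).val :=
    congrArg (fun f => InducedCategory.Hom.val f) h1
  rw [h2]
  have h3 : ((β F).hom.app i).val = toSheafify (J X) (F.obj i).val := by
    simp [β, sheafificationNatIso]
  rw [h3]
  have h4 : ((presheafToSheaf (J X) (A k)).map
      (colimit.ι (F ⋙ sheafToPresheaf (J X) (A k)) i)).val =
      sheafifyMap (J X) (colimit.ι (F ⋙ sheafToPresheaf (J X) (A k)) i) := rfl
  rw [h4, ← toSheafify_naturality]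


variable {F}

lemma injf {M N : ModuleCat.{0} k} (f : M ⟶ N) [IsIso f] : Function.Injective f := by
  have h : IsIso ((forget (ModuleCat.{0} k)).map f) := inferInstance
  exact fun a b hab => ((isIso_iff_bijective _).mp h).injective hab

lemma nat_app {Q Q' : (Opens X)ᵒᵖ ⥤ A k} (η : Q ⟶ Q') {V U : Opens X} (g : V ⟶ U)
    (s : Q.obj (op U)) :
    η.app (op V) (Q.map g.op s) = Q'.map g.op (η.app (op U) s) := by
  have h := ConcreteCategory.congr_hom (η.naturality g.op) s
  simp only [ConcreteCategory.comp_apply] at h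
  exact h

variable (F)

/-- the evaluated colimit cocone is a colimit -/
noncomputable def evc (U : (Opens X)ᵒᵖ) :
    IsColimit (((evaluation (Opens X)ᵒᵖ (A k)).obj U).mapCocone
      (colimit.cocone (F ⋙ sheafToPresheaf (J X) (A k)))) :=
  isColimitOfPreserves _ (colimit.isColimit _)

theorem loc_inj (U : Opens X) (i : I) (s : (F.obj i).val.obj (op U))
    (hs : (colimit.ι F i).val.app (op U) s = 0) (x : X) (hx : x ∈ U) :
    ∃ (V : Opens X) (hVU : V ≤ U), x ∈ V ∧ ∃ (j : I) (f : i ⟶ j),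
      (F.map f).val.app (op V) ((F.obj i).val.map (homOfLE hVU).op s) = 0 := by
  have h0 : (toSheafify (J X) (P F)).app (op U)
      ((colimit.ι (F ⋙ sheafToPresheaf (J X) (A k)) i).app (op U) s) =
      (toSheafify (J X) (P F)).app (op U) 0 := by
    have h1 := ConcreteCategory.congr_hom (congrArg (fun η => η.app (op U)) (star F i)) s
    simp only [NatTrans.comp_app, ConcreteCategory.comp_apply] at h1
    have h2 : (e F).hom.val.app (op U) ((colimit.ι F i).val.app (op U) s) = 0 := by
      rw [hs, map_zero]
    exact h1.symm.trans (h2.trans (map_zero _).symm)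
  have hmem := Presheaf.equalizerSieve_mem (J X) (toSheafify (J X) (P F)) _ _ h0
  obtain ⟨V, g, hg, hxV⟩ := hmem x hx
  have hg' : (P F).map g.op ((colimit.ι (F ⋙ sheafToPresheaf (J X) (A k)) i).app (op U) s)
      = 0 := by
    have h2 : (P F).map g.op ((colimit.ι (F ⋙ sheafToPresheaf (J X) (A k)) i).app (op U) s)
        = (P F).map g.op 0 := hg
    rw [h2, map_zero]
  have hrep : (colimit.ι (F ⋙ sheafToPresheaf (J X) (A k)) i).app (op V)
      ((F.obj i).val.map g.op s) = 0 := by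
    have h3 := nat_app (colimit.ι (F ⋙ sheafToPresheaf (J X) (A k)) i) g s
    exact h3.trans hg'
  have hrep2 : (colimit.ι (F ⋙ sheafToPresheaf (J X) (A k)) i).app (op V)
      ((F.obj i).val.map g.op s)
      = (colimit.ι (F ⋙ sheafToPresheaf (J X) (A k)) i).app (op V)
        (0 : (F.obj i).val.obj (op V)) := by
    rw [hrep, map_zero]
  obtain ⟨j, f, f', hff⟩ := Concrete.isColimit_exists_of_rep_eq
    ((F ⋙ sheafToPresheaf (J X) (A k)) ⋙ (evaluation (Opens X)ᵒᵖ (A k)).obj (op V))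
    (evc F (op V)) ((F.obj i).val.map g.op s) 0 hrep2
  refine ⟨V, leOfHom g, hxV, j, f, ?_⟩
  have hgg : (homOfLE (leOfHom g)).op = g.op := rfl
  rw [hgg]
  have hff' : (F.map f).val.app (op V) ((F.obj i).val.map g.op s)
      = (F.map f').val.app (op V) 0 := hff
  rw [hff', map_zero]

theorem loc_surj (U : Opens X) (t : (colimit F).val.obj (op U)) (x : X) (hx : x ∈ U) :
    ∃ (V : Opens X) (hVU : V ≤ U), x ∈ V ∧ ∃ (i : I) (s : (F.obj i).val.obj (op V)),
      (colimit.ι F i).val.app (op V) s = (colimit F).val.map (homOfLE hVU).op t := by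
  haveI : IsIso ((e F).hom.val) := by
    have : (e F).hom.val = (sheafToPresheaf (J X) (A k)).map (e F).hom := rfl
    rw [this]; infer_instance
  let t' : (sheafify (J X) (P F)).obj (op U) := (e F).hom.val.app (op U) t
  have hmem := Presheaf.imageSieve_mem (J X) (toSheafify (J X) (P F)) t'
  obtain ⟨V, g, hg, hxV⟩ := hmem x hx
  obtain ⟨p, hp⟩ := hg
  obtain ⟨i, s, hsrep⟩ := Concrete.isColimit_exists_rep
    ((F ⋙ sheafToPresheaf (J X) (A k)) ⋙ (evaluation (Opens X)ᵒᵖ (A k)).obj (op V))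
    (evc F (op V)) p
  refine ⟨V, leOfHom g, hxV, i, s, ?_⟩
  haveI : IsIso ((e F).hom.val.app (op V)) := inferInstance
  apply injf ((e F).hom.val.app (op V))
  have h1 := ConcreteCategory.congr_hom (congrArg (fun η => η.app (op V)) (star F i)) s
  simp only [NatTrans.comp_app, ConcreteCategory.comp_apply] at h1
  have hsrep' : (colimit.ι (F ⋙ sheafToPresheaf (J X) (A k)) i).app (op V) s = p := hsrep
  have h2 : (toSheafify (J X) (P F)).app (op V)
      ((colimit.ι (F ⋙ sheafToPresheaf (J X) (A k)) i).app (op V) s)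
      = (sheafify (J X) (P F)).map g.op t' := by rw [hsrep']; exact hp
  have h3 := nat_app ((e F).hom.val) g t
  have hgg : (homOfLE (leOfHom g)).op = g.op := rfl
  rw [hgg]
  exact h1.trans (h2.trans h3.symm)

lemma my_sup {α : Type} (s : Finset α) (j₀ : I) (j : α → I) (f : ∀ a, j₀ ⟶ j a) :
    ∃ (l : I) (h : j₀ ⟶ l) (g : ∀ a ∈ s, (j a ⟶ l)), ∀ (a : α) (ha : a ∈ s),
      f a ≫ g a ha = h := by
  classical
  let H : Finset (Σ' (A B : I) (_ : A ∈ insert j₀ (s.image j)) (_ : B ∈ insert j₀ (s.image j)),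
      A ⟶ B) :=
    (s.attach).image fun a => ⟨j₀, j a.1, Finset.mem_insert_self _ _,
      Finset.mem_insert_of_mem (Finset.mem_image_of_mem j a.2), f a.1⟩
  obtain ⟨S, T, hT⟩ := IsFiltered.sup_exists (insert j₀ (s.image j)) H
  refine ⟨S, T (Finset.mem_insert_self _ _),
    fun a ha => T (Finset.mem_insert_of_mem (Finset.mem_image_of_mem j ha)),
    fun a ha => hT _ _ ?_⟩
  exact Finset.mem_image_of_mem _ (Finset.mem_attach s ⟨a, ha⟩)

variable {F}

/-- elementwise composition for images of composable morphisms of the system -/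
lemma map_comp_app {i j l : I} (f : i ⟶ j) (g : j ⟶ l) (W : (Opens X)ᵒᵖ)
    (y : (F.obj i).val.obj W) :
    (F.map (f ≫ g)).val.app W y = (F.map g).val.app W ((F.map f).val.app W y) := by
  rw [F.map_comp]
  rfl

lemma res_res (Q : (Opens X)ᵒᵖ ⥤ A k) {W V U : Opens X} (h1 : W ≤ V) (h2 : V ≤ U)
    (s : Q.obj (op U)) :
    Q.map (homOfLE h1).op (Q.map (homOfLE h2).op s) = Q.map (homOfLE (h1.trans h2)).op s := by
  have h : Q.map (homOfLE h2).op ≫ Q.map (homOfLE h1).op = Q.map (homOfLE (h1.trans h2)).op := by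
    rw [← Q.map_comp]; rfl
  have := ConcreteCategory.congr_hom h s
  simpa using this

/-- interpret an abstract sheaf as a `TopCat` sheaf -/
def toTS (S : Sheaf (J X) (A k)) : TopCat.Sheaf (A k) (TopCat.of X) := S

variable (F)

theorem glob_inj [CompactSpace X] (i : I) (s : (F.obj i).val.obj (op ⊤))
    (hs : (colimit.ι F i).val.app (op ⊤) s = 0) :
    ∃ (j : I) (f : i ⟶ j), (F.map f).val.app (op ⊤) s = 0 := by
  classical
  have hloc := fun x : X => loc_inj F ⊤ i s hs x trivial
  choose V hVle hxV j f hf using hloc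
  obtain ⟨t₀, ht₀⟩ := isCompact_univ.elim_finite_subcover (fun x : X => (V x : Set X))
    (fun x => (V x).2) (fun z _ => Set.mem_iUnion.2 ⟨z, hxV z⟩)
  obtain ⟨l, h, g, hg⟩ := my_sup t₀ i j f
  refine ⟨l, h, ?_⟩
  have hcov : (⊤ : Opens X) ≤ iSup (fun a : {x // x ∈ t₀} => V a.1) := by
    intro z _
    have := ht₀ (Set.mem_univ z)
    simp only [Set.mem_iUnion] at this
    obtain ⟨x, hx, hz⟩ := this
    exact Opens.mem_iSup.2 ⟨⟨x, hx⟩, hz⟩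
  apply TopCat.Sheaf.eq_of_locally_eq' (toTS (F.obj l)) (fun a : {x // x ∈ t₀} => V a.1)
    ⊤ (fun a => homOfLE le_top) hcov
  intro a
  erw [map_zero]
  show (F.obj l).val.map (homOfLE (le_top : V a.1 ≤ ⊤)).op ((F.map h).val.app (op ⊤) s) = 0
  have e1 : (F.obj l).val.map (homOfLE (le_top : V a.1 ≤ ⊤)).op ((F.map h).val.app (op ⊤) s)
      = (F.map h).val.app (op (V a.1)) ((F.obj i).val.map (homOfLE le_top).op s) :=
    (nat_app (F.map h).val (homOfLE le_top) s).symm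
  rw [e1, ← hg a.1 a.2, map_comp_app]
  have e2 : (F.map (f a.1)).val.app (op (V a.1)) ((F.obj i).val.map (homOfLE le_top).op s) = 0 :=
    hf a.1
  rw [e2, map_zero]

theorem kill (D O : Opens X) (hOD : O ≤ D) (hrw : RWQC (O : Set X) (D : Set X)) (j₀ : I)
    (u : (F.obj j₀).val.obj (op D)) (hu : (colimit.ι F j₀).val.app (op D) u = 0) :
    ∃ (l : I) (h : j₀ ⟶ l),
      (F.map h).val.app (op O) ((F.obj j₀).val.map (homOfLE hOD).op u) = 0 := by
  classical
  set 𝒰 : Set (Set X) := {Y | ∃ (V : Opens X), (V : Set X) = Y ∧ ∃ (hVD : V ≤ D) (j : I)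
    (f : j₀ ⟶ j), (F.map f).val.app (op V) ((F.obj j₀).val.map (homOfLE hVD).op u) = 0}
    with h𝒰
  have hopen : ∀ Y ∈ 𝒰, IsOpen Y := by
    rintro Y ⟨V, rfl, -⟩
    exact V.2
  have hcover : (D : Set X) ⊆ ⋃₀ 𝒰 := by
    intro z hz
    obtain ⟨V, hVD, hzV, j, f, hf⟩ := loc_inj F D j₀ u hu z hz
    exact ⟨V, ⟨V, rfl, hVD, j, f, hf⟩, hzV⟩
  obtain ⟨𝒱, h𝒱sub, h𝒱fin, h𝒱cov⟩ := hrw 𝒰 hopen hcover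
  haveI : Finite ↥𝒱 := h𝒱fin.to_subtype
  haveI : Fintype ↥𝒱 := Fintype.ofFinite _
  have hchoice : ∀ Y : ↥𝒱, ∃ (V : Opens X), (V : Set X) = Y.1 ∧ ∃ (hVD : V ≤ D) (j : I)
      (f : j₀ ⟶ j), (F.map f).val.app (op V) ((F.obj j₀).val.map (homOfLE hVD).op u) = 0 :=
    fun Y => h𝒱sub Y.2
  choose Vo hVo hVD jj ff hff using hchoice
  obtain ⟨l, h, g, hg⟩ := my_sup (Finset.univ : Finset ↥𝒱) j₀ jj ff
  refine ⟨l, h, ?_⟩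
  have hcov' : O ≤ iSup (fun Y : ↥𝒱 => Vo Y ⊓ O) := by
    intro z hz
    obtain ⟨Y, hY, hzY⟩ := h𝒱cov hz
    refine Opens.mem_iSup.2 ⟨⟨Y, hY⟩, ?_, hz⟩
    show z ∈ Vo ⟨Y, hY⟩
    rw [← SetLike.mem_coe, hVo ⟨Y, hY⟩]
    exact hzY
  apply TopCat.Sheaf.eq_of_locally_eq' (toTS (F.obj l)) (fun Y : ↥𝒱 => Vo Y ⊓ O) O
    (fun Y => homOfLE inf_le_right) hcov'
  intro Y
  erw [map_zero]
  show (F.obj l).val.map (homOfLE (inf_le_right : Vo Y ⊓ O ≤ O)).op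
    ((F.map h).val.app (op O) ((F.obj j₀).val.map (homOfLE hOD).op u)) = 0
  rw [← nat_app (F.map h).val (homOfLE inf_le_right)
    ((F.obj j₀).val.map (homOfLE hOD).op u)]
  rw [res_res (F.obj j₀).val inf_le_right hOD u]
  rw [← hg Y (Finset.mem_univ Y), map_comp_app]
  have e1 : (F.obj j₀).val.map (homOfLE ((inf_le_right.trans hOD) :
      Vo Y ⊓ O ≤ D)).op u = (F.obj j₀).val.map (homOfLE (inf_le_left : Vo Y ⊓ O ≤ Vo Y)).op
        ((F.obj j₀).val.map (homOfLE (hVD Y)).op u) :=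
    (res_res (F.obj j₀).val inf_le_left (hVD Y) u).symm
  rw [e1, nat_app (F.map (ff Y)).val (homOfLE inf_le_left)
    ((F.obj j₀).val.map (homOfLE (hVD Y)).op u)]
  rw [hff Y, map_zero, map_zero]

lemma w_app {i j : I} (f : i ⟶ j) (W : (Opens X)ᵒᵖ) (y : (F.obj i).val.obj W) :
    (colimit.ι F j).val.app W ((F.map f).val.app W y) = (colimit.ι F i).val.app W y := by
  have hw := colimit.w F f
  have h2 : ((F.map f ≫ colimit.ι F j).val.app W) y = ((colimit.ι F i).val.app W) y :=
    ConcreteCategory.congr_hom (congrArg (fun η : _ ⟶ colimit F => η.val.app W) hw) y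
  exact h2

theorem glob_surj [CompactSpace X] (hX : LocallyWeaklyQuasiCompact X)
    (t : (colimit F).val.obj (op ⊤)) :
    ∃ (l : I) (σg : (F.obj l).val.obj (op ⊤)), (colimit.ι F l).val.app (op ⊤) σg = t := by
  classical
  have hloc := fun x : X => loc_surj F ⊤ t x trivial
  choose V hVle hxV idx s hs using hloc
  have hshrink := fun x : X => hX.lwc1 (V x : Set X) (V x).2 x (hxV x) ((V x : Set X))
    (((V x).2).mem_nhds (hxV x))
  choose W hWopen hxW hWsub hWr using hshrink
  let Wo : X → Opens X := fun x => ⟨W x, hWopen x⟩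
  have hWole : ∀ x : X, Wo x ≤ V x := fun x => hWsub x
  obtain ⟨t₀, ht₀⟩ := isCompact_univ.elim_finite_subcover (fun x : X => W x) hWopen
    (fun z _ => Set.mem_iUnion.2 ⟨z, hxW z⟩)
  obtain ⟨j₀, hj₀⟩ := IsFiltered.sup_objs_exists (t₀.image idx)
  let ι₀ := {x // x ∈ t₀}
  have hgc : ∀ a : ι₀, Nonempty (idx a.1 ⟶ j₀) := fun a =>
    hj₀ (Finset.mem_image_of_mem idx a.2)
  let gm : ∀ a : ι₀, idx a.1 ⟶ j₀ := fun a => (hgc a).some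
  let σ : ∀ a : ι₀, (F.obj j₀).val.obj (op (V a.1)) :=
    fun a => (F.map (gm a)).val.app (op (V a.1)) (s a.1)
  have hσ : ∀ a : ι₀, (colimit.ι F j₀).val.app (op (V a.1)) (σ a)
      = (colimit F).val.map (homOfLE (hVle a.1)).op t := fun a =>
    (w_app F (gm a) (op (V a.1)) (s a.1)).trans (hs a.1)
  let Dp : ι₀ → ι₀ → Opens X := fun a b => V a.1 ⊓ V b.1
  let u : ∀ a b : ι₀, (F.obj j₀).val.obj (op (Dp a b)) := fun a b =>
    (F.obj j₀).val.map (homOfLE (inf_le_left : Dp a b ≤ V a.1)).op (σ a)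
      - (F.obj j₀).val.map (homOfLE (inf_le_right : Dp a b ≤ V b.1)).op (σ b)
  have hu : ∀ a b : ι₀, (colimit.ι F j₀).val.app (op (Dp a b)) (u a b) = 0 := by
    intro a b
    have udef : u a b = (F.obj j₀).val.map (homOfLE (inf_le_left : Dp a b ≤ V a.1)).op (σ a)
      - (F.obj j₀).val.map (homOfLE (inf_le_right : Dp a b ≤ V b.1)).op (σ b) := rfl
    rw [udef, map_sub,
      nat_app (colimit.ι F j₀).val (homOfLE (inf_le_left : Dp a b ≤ V a.1)) (σ a),
      nat_app (colimit.ι F j₀).val (homOfLE (inf_le_right : Dp a b ≤ V b.1)) (σ b),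
      hσ a, hσ b,
      res_res (colimit F).val (inf_le_left : Dp a b ≤ V a.1) (hVle a.1) t,
      res_res (colimit F).val (inf_le_right : Dp a b ≤ V b.1) (hVle b.1) t]
    exact sub_eq_zero_of_eq rfl
  have hrwp : ∀ a b : ι₀, RWQC ((Wo a.1 ⊓ Wo b.1 : Opens X) : Set X) ((Dp a b : Opens X) : Set X) := by
    intro a b
    have h2 := hX.lwc2 (V a.1 : Set X) (V b.1 : Set X) (W a.1) (W b.1) (V a.1).2 (V b.1).2
      (hWopen a.1) (hWopen b.1) (hWr a.1) (hWr b.1)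
    exact h2
  have hWD : ∀ a b : ι₀, Wo a.1 ⊓ Wo b.1 ≤ Dp a b := fun a b =>
    inf_le_inf (hWole a.1) (hWole b.1)
  have hpair : ∀ q : ι₀ × ι₀, ∃ (j : I) (f : j₀ ⟶ j),
      (F.map f).val.app (op (Wo q.1.1 ⊓ Wo q.2.1))
        ((F.obj j₀).val.map (homOfLE (hWD q.1 q.2)).op (u q.1 q.2)) = 0 := fun q =>
    kill F (Dp q.1 q.2) (Wo q.1.1 ⊓ Wo q.2.1) (hWD q.1 q.2) (hrwp q.1 q.2) j₀ (u q.1 q.2)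
      (hu q.1 q.2)
  choose jp fp hfp using hpair
  obtain ⟨l, h, g, hg⟩ := my_sup (Finset.univ : Finset (ι₀ × ι₀)) j₀ jp fp
  let τ : ∀ a : ι₀, (F.obj l).val.obj (op (Wo a.1)) := fun a =>
    (F.obj l).val.map (homOfLE (hWole a.1)).op ((F.map h).val.app (op (V a.1)) (σ a))
  have hcovW : (⊤ : Opens X) ≤ iSup (fun a : ι₀ => Wo a.1) := by
    intro z _
    have := ht₀ (Set.mem_univ z)
    simp only [Set.mem_iUnion] at this
    obtain ⟨x, hx, hz⟩ := this
    exact Opens.mem_iSup.2 ⟨⟨x, hx⟩, hz⟩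
  have hcompat : TopCat.Presheaf.IsCompatible (toTS (F.obj l)).1 (fun a : ι₀ => Wo a.1) τ := by
    intro a b
    have l1 : Wo a.1 ⊓ Wo b.1 ≤ Wo a.1 := inf_le_left
    have l2 : Wo a.1 ⊓ Wo b.1 ≤ Wo b.1 := inf_le_right
    have l3 : Wo a.1 ⊓ Wo b.1 ≤ V a.1 := l1.trans (hWole a.1)
    have l4 : Wo a.1 ⊓ Wo b.1 ≤ V b.1 := l2.trans (hWole b.1)
    have l5 : Wo a.1 ⊓ Wo b.1 ≤ Dp a b := le_inf l3 l4
    show (F.obj l).val.map (homOfLE l1).op (τ a) = (F.obj l).val.map (homOfLE l2).op (τ b)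
    have τa : τ a = (F.obj l).val.map (homOfLE (hWole a.1)).op
      ((F.map h).val.app (op (V a.1)) (σ a)) := rfl
    have τb : τ b = (F.obj l).val.map (homOfLE (hWole b.1)).op
      ((F.map h).val.app (op (V b.1)) (σ b)) := rfl
    have step1 : (F.obj l).val.map (homOfLE l1).op (τ a)
        = (F.map h).val.app (op (Wo a.1 ⊓ Wo b.1))
          ((F.obj j₀).val.map (homOfLE l3).op (σ a)) := by
      rw [τa, res_res (F.obj l).val l1 (hWole a.1), ← nat_app (F.map h).val (homOfLE l3) (σ a)]
    have step2 : (F.obj l).val.map (homOfLE l2).op (τ b)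
        = (F.map h).val.app (op (Wo a.1 ⊓ Wo b.1))
          ((F.obj j₀).val.map (homOfLE l4).op (σ b)) := by
      rw [τb, res_res (F.obj l).val l2 (hWole b.1), ← nat_app (F.map h).val (homOfLE l4) (σ b)]
    rw [step1, step2, ← sub_eq_zero, ← map_sub]
    have e3 : (F.obj j₀).val.map (homOfLE l5).op (u a b)
        = (F.obj j₀).val.map (homOfLE l3).op (σ a)
          - (F.obj j₀).val.map (homOfLE l4).op (σ b) := by
      have udef : u a b = (F.obj j₀).val.map (homOfLE (inf_le_left : Dp a b ≤ V a.1)).op (σ a)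
        - (F.obj j₀).val.map (homOfLE (inf_le_right : Dp a b ≤ V b.1)).op (σ b) := rfl
      rw [udef, map_sub, res_res (F.obj j₀).val l5 (inf_le_left : Dp a b ≤ V a.1) (σ a),
        res_res (F.obj j₀).val l5 (inf_le_right : Dp a b ≤ V b.1) (σ b)]
    rw [← e3, ← hg (a, b) (Finset.mem_univ _), map_comp_app]
    have e4 : (F.obj j₀).val.map (homOfLE l5).op (u a b)
        = (F.obj j₀).val.map (homOfLE (hWD a b)).op (u a b) := rfl
    rw [e4]
    have e5 : (F.map (fp (a, b))).val.app (op (Wo a.1 ⊓ Wo b.1))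
        ((F.obj j₀).val.map (homOfLE (hWD a b)).op (u a b)) = 0 := hfp (a, b)
    rw [e5, map_zero]
  obtain ⟨σg, hσg, -⟩ := TopCat.Sheaf.existsUnique_gluing' (toTS (F.obj l))
    (fun a : ι₀ => Wo a.1) ⊤ (fun a => homOfLE le_top) hcovW τ hcompat
  refine ⟨l, σg, ?_⟩
  apply TopCat.Sheaf.eq_of_locally_eq' (toTS (colimit F)) (fun a : ι₀ => Wo a.1) ⊤
    (fun a => homOfLE le_top) hcovW
  intro a
  show (colimit F).val.map (homOfLE (le_top : Wo a.1 ≤ ⊤)).op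
      ((colimit.ι F l).val.app (op ⊤) σg)
    = (colimit F).val.map (homOfLE le_top).op t
  rw [← nat_app (colimit.ι F l).val (homOfLE (le_top : Wo a.1 ≤ ⊤)) σg]
  have hσg' : (F.obj l).val.map (homOfLE (le_top : Wo a.1 ≤ ⊤)).op σg = τ a := hσg a
  rw [hσg']
  have τa : τ a = (F.obj l).val.map (homOfLE (hWole a.1)).op
    ((F.map h).val.app (op (V a.1)) (σ a)) := rfl
  rw [τa, nat_app (colimit.ι F l).val (homOfLE (hWole a.1))
    ((F.map h).val.app (op (V a.1)) (σ a)), w_app F h, hσ a,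
    res_res (colimit F).val (hWole a.1) (hVle a.1) t]

end Stmt8Aux

/-- For a quasi-compact locally weakly quasi-compact space, the natural morphism
`colim_i Γ(X;F_i) → Γ(X; colim_i F_i)` is an isomorphism for filtered systems of sheaves. -/

theorem stmt_8 {k : Type} [CommRing k] {X : Type} [TopologicalSpace X]
    [CompactSpace X] (hX : LocallyWeaklyQuasiCompact X)
    {I : Type} [SmallCategory I] [IsFiltered I]
    (F : I ⥤ Sheaf (Opens.grothendieckTopology X) (ModuleCat k)) :
    IsIso (colimit.post F (globalSections k X)) := by
  have hpost : ∀ (i : I) (a : (F.obj i).val.obj (op ⊤)),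
      (colimit.post F (globalSections k X)) ((colimit.ι (F ⋙ globalSections k X) i) a)
        = (colimit.ι F i).val.app (op ⊤) a := by
    intro i a
    have h := ConcreteCategory.congr_hom (colimit.ι_post F (globalSections k X) i) a
    exact h
  have hbij : Function.Bijective (colimit.post F (globalSections k X)) := by
    constructor
    · intro x y hxy
      obtain ⟨i, a, rfl⟩ := Concrete.colimit_exists_rep (F ⋙ globalSections k X) x
      obtain ⟨j, b, rfl⟩ := Concrete.colimit_exists_rep (F ⋙ globalSections k X) y
      have hxy' : (colimit.ι F i).val.app (op ⊤) a = (colimit.ι F j).val.app (op ⊤) b := by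
        rw [← hpost i a, ← hpost j b]; exact hxy
      let f := IsFiltered.leftToMax i j
      let g := IsFiltered.rightToMax i j
      let m := IsFiltered.max i j
      let d := (F.map f).val.app (op ⊤) a - (F.map g).val.app (op ⊤) b
      have hd : (colimit.ι F m).val.app (op ⊤) d = 0 := by
        have ddef : d = (F.map f).val.app (op ⊤) a - (F.map g).val.app (op ⊤) b := rfl
        rw [ddef, map_sub]; erw [Stmt8Aux.w_app F f, Stmt8Aux.w_app F g, hxy']
        exact sub_self _
      obtain ⟨n, q, hq⟩ := Stmt8Aux.glob_inj F m d hd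
      have key : (F.map (f ≫ q)).val.app (op ⊤) a = (F.map (g ≫ q)).val.app (op ⊤) b := by
        rw [Stmt8Aux.map_comp_app f q (op ⊤) a, Stmt8Aux.map_comp_app g q (op ⊤) b,
          ← sub_eq_zero, ← map_sub]
        exact hq
      exact Concrete.colimit_rep_eq_of_exists (F ⋙ globalSections k X) a b ⟨n, f ≫ q, g ≫ q, key⟩
    · intro t
      obtain ⟨l, σg, hσg⟩ := Stmt8Aux.glob_surj F hX t
      exact ⟨colimit.ι (F ⋙ globalSections k X) l σg, by rw [hpost l σg]; exact hσg⟩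
  exact (ConcreteCategory.isIso_iff_bijective _).mpr hbij
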